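/- Let a : ℕ → 𝕊¹ (unit circle in ℂ) satisfy a(n+1)/a(n) → 1 and suppose the orbit {a(n) : n ∈ ℕ} is dense in 𝕊¹, and for every r ∈ (0,1), lim_{N→∞} sup_{n ∈ [rN, N]} |a(n) − a(N)| → 0 as r → 1⁻ (uniformly). Then the Cesàro averages (1/N) ∑_{n=1}^N a(n) do not converge as N → ∞. -/

import Mathlib

open Filter
set_option maxHeartbeats 1000000

theorem tendsto_a (a : ℕ → ℂ) (L : ℂ)
    (hunif : ∀ ε > 0, ∃ r ∈ Set.Ioo (0:ℝ) 1, ∀ᶠ N : ℕ in atTop,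
      ∀ n : ℕ, r * N ≤ (n : ℝ) → n ≤ N → ‖a n - a N‖ < ε)
    (havg : Tendsto (fun N : ℕ => (N : ℂ)⁻¹ * ∑ n ∈ Finset.Icc 1 N, a n)
      atTop (nhds L)) : Tendsto a atTop (nhds L) := by
  rw [Metric.tendsto_atTop]
  intro ε hε
  set ε₀ := ε / 4 with hε₀def
  have hε₀ : 0 < ε₀ := by positivity
  obtain ⟨r, hr, hev⟩ := hunif ε₀ hε₀
  have h1r : 0 < 1 - r := by linarith [hr.2]
  set δ := ε * (1 - r) / 8 with hδdef
  have hδ : 0 < δ := by positivity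
  rw [Metric.tendsto_atTop] at havg
  obtain ⟨N₀', hN₀'⟩ := havg δ hδ
  set N₀ := max N₀' 1 with hN₀def
  have hN₀ : ∀ m ≥ N₀, dist ((m : ℂ)⁻¹ * ∑ n ∈ Finset.Icc 1 m, a n) L < δ :=
    fun m hm => hN₀' m (le_trans (le_max_left _ _) hm)
  have hN₀1 : 1 ≤ N₀ := le_max_right _ _
  have h2 : ∀ᶠ N : ℕ in atTop, (N₀ : ℝ) ≤ r * N :=
    (tendsto_natCast_atTop_atTop.const_mul_atTop hr.1).eventually_ge_atTop _
  have h3 : ∀ᶠ N : ℕ in atTop, (2 : ℝ) / (1 - r) ≤ (N : ℝ) :=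
    tendsto_natCast_atTop_atTop.eventually_ge_atTop _
  have h4 : ∀ᶠ N : ℕ in atTop, N₀ ≤ N := eventually_ge_atTop _
  have key : ∀ᶠ N : ℕ in atTop, dist (a N) L < ε := by
    filter_upwards [hev, h2, h3, h4] with N hN1 hN2 hN3 hN4
    set M := ⌈r * N⌉₊ with hMdef
    have hMr : r * N ≤ (M : ℝ) := Nat.le_ceil _
    have hrN0 : (0:ℝ) ≤ r * N := mul_nonneg hr.1.le (Nat.cast_nonneg _)
    have hMr2 : (M : ℝ) < r * N + 1 := Nat.ceil_lt_add_one hrN0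
    have hNbig : (2:ℝ) ≤ (1 - r) * N := by
      have := hN3
      rw [div_le_iff₀ h1r] at this
      linarith
    have hMNR : (M : ℝ) < N := by nlinarith
    have hMN : M < N := by exact_mod_cast hMNR
    have hM0 : N₀ ≤ M := by
      have : (N₀ : ℝ) ≤ (M : ℝ) := le_trans hN2 hMr
      exact_mod_cast this
    -- sums
    set T : ℕ → ℂ := fun k => ∑ n ∈ Finset.Icc 1 k, a n with hT
    have hIcc : ∀ k : ℕ, Finset.Icc 1 k = Finset.Ioc 0 k := fun k => Finset.Icc_add_one_left_eq_Ioc 0 k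
    have hsplit : T N - T M = ∑ n ∈ Finset.Ioc M N, a n := by
      have h := Finset.sum_Ioc_consecutive (fun n => a n) (Nat.zero_le M) hMN.le
      simp only [hT, hIcc]
      linear_combination -h
    set c : ℕ := N - M with hc
    have hcR : ((c : ℕ) : ℝ) = (N : ℝ) - M := by
      rw [hc, Nat.cast_sub hMN.le]
    have hcC : ((c : ℕ) : ℂ) = (N : ℂ) - M := by
      rw [hc, Nat.cast_sub hMN.le]
    -- error bound on the tail sum
    have htail : ‖(T N - T M) - (c : ℂ) * a N‖ ≤ (c : ℝ) * ε₀ := by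
      rw [hsplit]
      have hconst : (c : ℂ) * a N = ∑ n ∈ Finset.Ioc M N, a N := by
        rw [Finset.sum_const, Nat.card_Ioc, nsmul_eq_mul]
      rw [hconst, ← Finset.sum_sub_distrib]
      calc ‖∑ n ∈ Finset.Ioc M N, (a n - a N)‖
          ≤ ∑ n ∈ Finset.Ioc M N, ‖a n - a N‖ := norm_sum_le _ _
        _ ≤ ∑ n ∈ Finset.Ioc M N, ε₀ := by
            apply Finset.sum_le_sum
            intro n hn
            rw [Finset.mem_Ioc] at hn
            exact (hN1 n (le_trans (le_trans hMr (by exact_mod_cast hn.1.le)) le_rfl) hn.2).le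
        _ = (c : ℝ) * ε₀ := by rw [Finset.sum_const, Nat.card_Ioc, nsmul_eq_mul]
    -- averages close to L
    have havgbound : ∀ m : ℕ, N₀ ≤ m → ‖T m - (m : ℂ) * L‖ ≤ (m : ℝ) * δ := by
      intro m hm
      have hm0 : (m : ℂ) ≠ 0 := Nat.cast_ne_zero.mpr (by omega)
      have hrw : T m - (m : ℂ) * L = (m : ℂ) * ((m : ℂ)⁻¹ * T m - L) := by
        field_simp
      rw [hrw, norm_mul, Complex.norm_natCast]
      have := (hN₀ m hm)
      rw [dist_eq_norm] at this
      exact mul_le_mul_of_nonneg_left this.le (Nat.cast_nonneg _)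
    have hTN := havgbound N hN4
    have hTM := havgbound M hM0
    -- combine
    have hMleN : (M : ℝ) ≤ N := hMNR.le
    have hsum : ‖(T N - T M) - (c : ℂ) * L‖ ≤ 2 * (N : ℝ) * δ := by
      have : (T N - T M) - (c : ℂ) * L = (T N - (N : ℂ) * L) - (T M - (M : ℂ) * L) := by
        rw [hcC]; ring
      rw [this]
      calc ‖(T N - (N : ℂ) * L) - (T M - (M : ℂ) * L)‖
          ≤ ‖T N - (N : ℂ) * L‖ + ‖T M - (M : ℂ) * L‖ := norm_sub_le _ _
        _ ≤ (N : ℝ) * δ + (M : ℝ) * δ := add_le_add hTN hTM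
        _ ≤ 2 * (N : ℝ) * δ := by nlinarith
    have hfinal : (c : ℝ) * ‖a N - L‖ ≤ (c : ℝ) * ε₀ + 2 * (N : ℝ) * δ := by
      have h5 : (c : ℝ) * ‖a N - L‖ = ‖(c : ℂ) * a N - (c : ℂ) * L‖ := by
        rw [← mul_sub, norm_mul, Complex.norm_natCast]
      rw [h5]
      calc ‖(c : ℂ) * a N - (c : ℂ) * L‖
          ≤ ‖(c : ℂ) * a N - (T N - T M)‖ + ‖(T N - T M) - (c : ℂ) * L‖ := by
            have := norm_sub_le ((c : ℂ) * a N - (T N - T M)) ((c : ℂ) * L - (T N - T M))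
            rw [show (c : ℂ) * a N - (T N - T M) - ((c : ℂ) * L - (T N - T M)) = (c : ℂ) * a N - (c : ℂ) * L by ring] at this
            rw [show ‖(c : ℂ) * L - (T N - T M)‖ = ‖(T N - T M) - (c : ℂ) * L‖ from norm_sub_rev _ _] at this
            calc ‖(c : ℂ) * a N - (c : ℂ) * L‖ ≤ _ := this
              _ = ‖(c : ℂ) * a N - (T N - T M)‖ + ‖(T N - T M) - (c : ℂ) * L‖ := rfl
        _ ≤ (c : ℝ) * ε₀ + 2 * (N : ℝ) * δ := by
            apply add_le_add _ hsum
            rw [norm_sub_rev]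
            exact htail
    -- numerics
    have hcbig : (1 - r) * (N : ℝ) / 2 ≤ (c : ℝ) := by
      rw [hcR]; nlinarith
    have hcpos : (0 : ℝ) < (c : ℝ) := by
      rw [hcR]; nlinarith
    have hx : (0 : ℝ) ≤ ‖a N - L‖ := norm_nonneg _
    rw [dist_eq_norm]
    have e1 : 2 * (N : ℝ) * δ ≤ (c : ℝ) * (ε / 2) := by
      have hmul : (1 - r) * (N : ℝ) / 2 * ε ≤ (c : ℝ) * ε :=
        mul_le_mul_of_nonneg_right hcbig hε.le
      rw [hδdef]; nlinarith
    have e2 : (c : ℝ) * ‖a N - L‖ ≤ (c : ℝ) * (3 * ε / 4) := by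
      rw [hε₀def] at hfinal
      nlinarith
    have e3 : ‖a N - L‖ ≤ 3 * ε / 4 := le_of_mul_le_mul_left e2 hcpos
    linarith
  obtain ⟨Nb, hNb⟩ := eventually_atTop.mp key
  exact ⟨Nb, hNb⟩

theorem notcount : ¬ (Set.Ioo (0:ℝ) 1).Countable := by
  intro h
  have h2 := Cardinal.mk_Ioo_real (show (0:ℝ) < 1 by norm_num)
  have h3 := h.le_aleph0
  rw [h2] at h3
  exact absurd h3 (not_le.mpr Cardinal.aleph0_lt_continuum)

theorem sphere_not_countable : ¬ (Metric.sphere (0:ℂ) 1).Countable := by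
  intro h
  set f : ℝ → ℂ := fun t => ⟨t, Real.sqrt (1 - t^2)⟩ with hf
  have hinj : Function.Injective f := by
    intro s t hst
    have := congrArg Complex.re hst
    simpa [hf] using this
  have hmaps : ∀ t ∈ Set.Ioo (0:ℝ) 1, f t ∈ Metric.sphere (0:ℂ) 1 := by
    intro t ht
    simp only [Metric.mem_sphere, dist_zero_right]
    have h1 : (0:ℝ) ≤ 1 - t^2 := by nlinarith [ht.1, ht.2]
    have : ‖f t‖ = 1 := by
      rw [Complex.norm_def, Complex.normSq_mk, Real.mul_self_sqrt h1]
      rw [show t * t + (1 - t^2) = 1 by ring]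
      exact Real.sqrt_one
    simpa using this
  have : (Set.Ioo (0:ℝ) 1).Countable := by
    have h4 : (f ⁻¹' (Metric.sphere (0:ℂ) 1)).Countable := h.preimage hinj
    exact h4.mono (fun t ht => hmaps t ht)
  exact notcount this

/-- If `a : ℕ → 𝕊¹` satisfies `a(n+1)/a(n) → 1`, has dense orbit in the
unit circle, and is asymptotically constant on intervals `[rN, N]` as `r → 1⁻`, then its
Cesàro averages do not converge. -/
theorem stmt12 (a : ℕ → ℂ) (hmod : ∀ n, ‖a n‖ = 1)
    (hratio : Tendsto (fun n => a (n + 1) / a n) atTop (nhds 1))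
    (hdense : ∀ z : ℂ, ‖z‖ = 1 → z ∈ closure (Set.range a))
    (hunif : ∀ ε > 0, ∃ r ∈ Set.Ioo (0:ℝ) 1, ∀ᶠ N : ℕ in atTop,
      ∀ n : ℕ, r * N ≤ (n : ℝ) → n ≤ N → ‖a n - a N‖ < ε) :
    ¬ ∃ L : ℂ, Tendsto (fun N : ℕ => (N : ℂ)⁻¹ * ∑ n ∈ Finset.Icc 1 N, a n)
      atTop (nhds L) := by
  rintro ⟨L, havg⟩
  have hta : Tendsto a atTop (nhds L) := tendsto_a a L hunif havg
  -- the set insert L (range a) is compact, hence closed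
  have hK : IsCompact (insert L (Set.range a)) := hta.isCompact_insert_range
  have hKc : IsClosed (insert L (Set.range a)) := hK.isClosed
  have hsub : Metric.sphere (0:ℂ) 1 ⊆ insert L (Set.range a) := by
    intro z hz
    rw [Metric.mem_sphere, dist_zero_right] at hz
    have h1 := hdense z hz
    have h2 : closure (Set.range a) ⊆ insert L (Set.range a) :=
      closure_minimal (Set.subset_insert _ _) hKc
    exact h2 h1
  have hcount : (insert L (Set.range a)).Countable :=
    (Set.countable_range a).insert L
  exact sphere_not_countable (hcount.mono hsub)
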